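/- Let N ≥ 1 and let C ⊆ ℂ^N be a nonempty bounded open balanced set, i.e., λ·z ∈ C whenever z ∈ C and λ ∈ ℂ with |λ| ≤ 1. Then sup{ |f(0)|² : f : ℂ^N → ℂ holomorphic on C with ∫_C |f|² dV ≤ 1 } = 1/vol(C), where dV and vol denote Lebesgue measure on ℂ^N ≅ ℝ^{2N}. -/

import Mathlib

open MeasureTheory Real

lemma circle_submean (g : ℂ → ℂ) (hg : DifferentiableOn ℂ g (Metric.closedBall 0 1)) :
    2 * π * ‖g 0‖ ≤ ∫ θ in (0:ℝ)..(2*π), ‖g (circleMap 0 1 θ)‖ := by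
  have h0 : (0:ℂ) ∈ Metric.ball (0:ℂ) 1 := by simp
  have hint := hg.circleIntegral_sub_inv_smul h0
  rw [circleIntegral] at hint
  have heq : ∀ θ : ℝ, deriv (circleMap 0 1) θ • ((circleMap 0 1 θ - 0)⁻¹ • g (circleMap 0 1 θ))
      = Complex.I * g (circleMap 0 1 θ) := by
    intro θ
    have hne : circleMap 0 1 θ ≠ 0 := circleMap_ne_center one_ne_zero
    rw [deriv_circleMap]
    simp only [smul_eq_mul, sub_zero, zero_add]
    field_simp
  simp only [heq] at hint
  rw [intervalIntegral.integral_const_mul] at hint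
  have h2 : (∫ θ in (0:ℝ)..(2*π), g (circleMap 0 1 θ)) = (2 * π : ℝ) * g 0 := by
    apply mul_left_cancel₀ Complex.I_ne_zero
    rw [hint, smul_eq_mul]
    push_cast
    ring
  have h3 : ‖∫ θ in (0:ℝ)..(2*π), g (circleMap 0 1 θ)‖
      ≤ ∫ θ in (0:ℝ)..(2*π), ‖g (circleMap 0 1 θ)‖ :=
    intervalIntegral.norm_integral_le_integral_norm (by positivity)
  calc 2 * π * ‖g 0‖ = ‖((2*π:ℝ):ℂ) * g 0‖ := by
        rw [norm_mul, Complex.norm_real, Real.norm_eq_abs, abs_of_pos (by positivity)]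
    _ = ‖∫ θ in (0:ℝ)..(2*π), g (circleMap 0 1 θ)‖ := by rw [h2]
    _ ≤ _ := h3

lemma pointwise_step {N : ℕ} {C : Set (Fin N → ℂ)} {f : (Fin N → ℂ) → ℂ}
    (hCbal : ∀ z ∈ C, ∀ l : ℂ, ‖l‖ ≤ 1 → l • z ∈ C)
    (hfd : DifferentiableOn ℂ f C) {z : Fin N → ℂ} (hz : z ∈ C) :
    (‖f 0‖₊ : ENNReal)^2 * ENNReal.ofReal (2*π)
      ≤ ∫⁻ θ in Set.Ioc (0:ℝ) (2*π), (‖f (circleMap 0 1 θ • z)‖₊ : ENNReal)^2 := by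
  have hmap : ∀ l : ℂ, l ∈ Metric.closedBall (0:ℂ) 1 → l • z ∈ C := fun l hl =>
    hCbal z hz l (by simpa [Metric.mem_closedBall, dist_zero_right] using hl)
  have hsm : DifferentiableOn ℂ (fun l : ℂ => l • z) (Metric.closedBall 0 1) :=
    (differentiable_id.smul_const z).differentiableOn
  have hgd : DifferentiableOn ℂ (fun l : ℂ => (f (l • z))^2) (Metric.closedBall 0 1) :=
    (hfd.comp hsm fun l hl => hmap l hl).pow 2
  have key := circle_submean _ hgd
  have hg0 : ‖f ((0:ℂ) • z) ^ 2‖ = ‖f 0‖^2 := by rw [zero_smul]; exact norm_pow _ _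
  rw [hg0] at key
  have hcm : ∀ θ : ℝ, circleMap 0 1 θ • z ∈ C := fun θ =>
    hCbal z hz _ (by simp [circleMap])
  have hcont : Continuous fun θ : ℝ => f (circleMap 0 1 θ • z) :=
    hfd.continuousOn.comp_continuous
      ((continuous_circleMap 0 1).smul continuous_const) hcm
  simp only [norm_pow] at key
  rw [intervalIntegral.integral_of_le (by positivity)] at key
  set L := ∫⁻ θ in Set.Ioc (0:ℝ) (2*π), (‖f (circleMap 0 1 θ • z)‖₊ : ENNReal)^2 with hL
  by_cases hLtop : L = ⊤
  · rw [hLtop]; exact le_top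
  have heq2 : ∫ θ in Set.Ioc (0:ℝ) (2*π), ‖f (circleMap 0 1 θ • z)‖^2 = L.toReal := by
    rw [MeasureTheory.integral_eq_lintegral_of_nonneg_ae (f := fun θ => ‖f (circleMap 0 1 θ • z)‖^2)
      (Filter.Eventually.of_forall fun θ => by positivity)
      ((hcont.norm.pow 2)).aestronglyMeasurable.restrict]
    congr 1
    refine lintegral_congr fun θ => ?_
    rw [ENNReal.ofReal_pow (norm_nonneg _), ofReal_norm, enorm_eq_nnnorm]
  rw [heq2] at key
  have : ENNReal.ofReal (‖f 0‖^2 * (2*π)) ≤ ENNReal.ofReal L.toReal := by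
    apply ENNReal.ofReal_le_ofReal
    nlinarith [key]
  rw [ENNReal.ofReal_toReal hLtop] at this
  refine le_trans (le_of_eq ?_) this
  rw [← enorm_eq_nnnorm, ← ofReal_norm, ← ENNReal.ofReal_pow (norm_nonneg _),
    ← ENNReal.ofReal_mul (by positivity)]

lemma inner_change {N : ℕ} {C : Set (Fin N → ℂ)}
    (hCbal : ∀ z ∈ C, ∀ l : ℂ, ‖l‖ ≤ 1 → l • z ∈ C)
    (g : (Fin N → ℂ) → ENNReal) (c : ℂ) (hc1 : ‖c‖ = 1) :
    ∫⁻ z in C, g (c • z) = ∫⁻ w in C, g w := by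
  have hc0 : c ≠ 0 := by intro h; rw [h] at hc1; simp at hc1
  have hu : c ∈ Submonoid.unitSphere ℂ := by
    simp [Submonoid.unitSphere, mem_sphere_zero_iff_norm, hc1]
  set u : Circle := ⟨c, hu⟩ with hudef
  have hmp1 : MeasurePreserving (fun w : ℂ => c * w) volume volume := by
    have h := (rotation u).measurePreserving
    have heq : ⇑(rotation u) = fun w : ℂ => c * w := funext fun w => rotation_apply u w
    rwa [heq] at h
  have hmp : MeasurePreserving (fun z : Fin N → ℂ => c • z) volume volume := by
    have h := measurePreserving_pi (fun _ : Fin N => (volume : Measure ℂ))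
      (fun _ => volume) (fun _ => hmp1)
    have heq : (fun (a : Fin N → ℂ) (i : Fin N) => c * a i) = fun z : Fin N → ℂ => c • z := by
      funext a i; simp
    rw [heq] at h
    simpa [volume_pi] using h
  have hemb : MeasurableEmbedding (fun z : Fin N → ℂ => c • z) :=
    (Homeomorph.smulOfNeZero c hc0).isClosedEmbedding.measurableEmbedding
  have himg : (fun z : Fin N → ℂ => c • z) '' C = C := by
    apply Set.Subset.antisymm
    · rintro _ ⟨z, hz, rfl⟩; exact hCbal z hz c hc1.le
    · intro w hw
      refine ⟨c⁻¹ • w, hCbal w hw c⁻¹ ?_, ?_⟩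
      · rw [norm_inv, hc1]; norm_num
      · show c • c⁻¹ • w = w
        rw [smul_smul, mul_inv_cancel₀ hc0, one_smul]
  have h := hmp.setLIntegral_comp_emb hemb g C
  rwa [himg] at h

/-- The Bergman kernel function of a bounded balanced domain at the origin equals
the reciprocal of the volume of the domain. -/
theorem bergman_kernel_at_zero_of_balanced
    (N : ℕ) (hN : 1 ≤ N) (C : Set (Fin N → ℂ))
    (hCne : C.Nonempty) (hCb : Bornology.IsBounded C) (hCo : IsOpen C)
    (hCbal : ∀ z ∈ C, ∀ l : ℂ, ‖l‖ ≤ 1 → l • z ∈ C) :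
    sSup {x : ℝ | ∃ f : (Fin N → ℂ) → ℂ, DifferentiableOn ℂ f C ∧
        (∫⁻ z in C, (‖f z‖₊ : ENNReal) ^ 2 ∂volume) ≤ 1 ∧ x = ‖f 0‖ ^ 2}
      = 1 / (volume C).toReal := by
  obtain ⟨z₀, hz₀⟩ := hCne
  have hvol0 : volume C ≠ 0 := (hCo.measure_pos volume ⟨z₀, hz₀⟩).ne'
  have hvoltop : volume C ≠ ⊤ := hCb.measure_lt_top.ne
  have hT : 0 < (volume C).toReal := ENNReal.toReal_pos hvol0 hvoltop
  set S := {x : ℝ | ∃ f : (Fin N → ℂ) → ℂ, DifferentiableOn ℂ f C ∧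
        (∫⁻ z in C, (‖f z‖₊ : ENNReal) ^ 2 ∂volume) ≤ 1 ∧ x = ‖f 0‖ ^ 2} with hS
  have hub : ∀ x ∈ S, x ≤ 1 / (volume C).toReal := by
    rintro x ⟨f, hfd, hfint, rfl⟩
    set P := ENNReal.ofReal (2*π) with hP
    have hP0 : P ≠ 0 := by
      rw [hP, Ne, ENNReal.ofReal_eq_zero, not_le]
      positivity
    have hPtop : P ≠ ⊤ := ENNReal.ofReal_ne_top
    -- measurability for Tonelli
    have hcont2 : ContinuousOn (fun p : (Fin N → ℂ) × ℝ => f (circleMap 0 1 p.2 • p.1))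
        (C ×ˢ (Set.univ : Set ℝ)) := by
      apply hfd.continuousOn.comp
      · exact (((continuous_circleMap 0 1).comp continuous_snd).smul
          continuous_fst).continuousOn
      · rintro ⟨z, θ⟩ ⟨hz, -⟩
        exact hCbal z hz _ (by simp [circleMap])
    have haem0 : AEMeasurable (fun p : (Fin N → ℂ) × ℝ => f (circleMap 0 1 p.2 • p.1))
        ((volume.prod volume).restrict (C ×ˢ (Set.univ : Set ℝ))) :=
      hcont2.aemeasurable (hCo.measurableSet.prod MeasurableSet.univ)
    have haem : AEMeasurable (Function.uncurry fun (z : Fin N → ℂ) (θ : ℝ) =>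
        ((‖f (circleMap 0 1 θ • z)‖₊ : ENNReal))^2)
        ((volume.restrict C).prod (volume.restrict (Set.Ioc (0:ℝ) (2*π)))) := by
      rw [Measure.prod_restrict]
      have h1 : AEMeasurable (fun p : (Fin N → ℂ) × ℝ => f (circleMap 0 1 p.2 • p.1))
          ((volume.prod volume).restrict (C ×ˢ Set.Ioc (0:ℝ) (2*π))) :=
        haem0.mono_measure
          (Measure.restrict_mono (Set.prod_mono_right (Set.subset_univ _)) le_rfl)
      exact (h1.nnnorm.coe_nnreal_ennreal).pow_const 2
    have hchain : (‖f 0‖₊ : ENNReal)^2 * P * volume C ≤ P := by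
      calc (‖f 0‖₊ : ENNReal)^2 * P * volume C
          = ∫⁻ _z in C, ((‖f 0‖₊ : ENNReal)^2 * P) ∂volume := by rw [setLIntegral_const]
        _ ≤ ∫⁻ z in C, (∫⁻ θ in Set.Ioc (0:ℝ) (2*π),
              (‖f (circleMap 0 1 θ • z)‖₊ : ENNReal)^2) ∂volume :=
            setLIntegral_mono' hCo.measurableSet (fun z hz => pointwise_step hCbal hfd hz)
        _ = ∫⁻ θ in Set.Ioc (0:ℝ) (2*π),
              (∫⁻ z in C, (‖f (circleMap 0 1 θ • z)‖₊ : ENNReal)^2) ∂volume :=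
            lintegral_lintegral_swap haem
        _ = ∫⁻ _θ in Set.Ioc (0:ℝ) (2*π), (∫⁻ w in C, (‖f w‖₊ : ENNReal)^2) ∂volume := by
            refine lintegral_congr fun θ => ?_
            exact inner_change hCbal (fun w => (‖f w‖₊ : ENNReal)^2) _ (by simp [circleMap])
        _ ≤ ∫⁻ _θ in Set.Ioc (0:ℝ) (2*π), 1 ∂volume := lintegral_mono fun _ => hfint
        _ = P := by
            rw [setLIntegral_const, one_mul, Real.volume_Ioc, sub_zero]
    have h1 : (‖f 0‖₊ : ENNReal)^2 * volume C ≤ 1 := by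
      rw [← ENNReal.mul_le_mul_iff_left hP0 hPtop, one_mul, mul_right_comm]
      exact hchain
    have h2 : (‖f 0‖₊ : ENNReal)^2 ≤ (volume C)⁻¹ :=
      ENNReal.le_inv_iff_mul_le.mpr h1
    calc ‖f 0‖^2 = ((‖f 0‖₊ : ENNReal)^2).toReal := by
          simp [ENNReal.toReal_pow]
      _ ≤ ((volume C)⁻¹).toReal := ENNReal.toReal_mono (ENNReal.inv_ne_top.mpr hvol0) h2
      _ = 1 / (volume C).toReal := by rw [ENNReal.toReal_inv, one_div]
  have hmem : 1 / (volume C).toReal ∈ S := by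
    refine ⟨fun _ => ((Real.sqrt (1 / (volume C).toReal) : ℝ) : ℂ),
      differentiableOn_const _, ?_, ?_⟩
    · have hnn : ((‖((Real.sqrt (1 / (volume C).toReal) : ℝ) : ℂ)‖₊ : ENNReal))^2
          = ENNReal.ofReal (1 / (volume C).toReal) := by
        rw [← enorm_eq_nnnorm, ← ofReal_norm, ← ENNReal.ofReal_pow (norm_nonneg _)]
        congr 1
        rw [Complex.norm_real, Real.norm_eq_abs, abs_of_nonneg (Real.sqrt_nonneg _),
          Real.sq_sqrt (by positivity)]
      rw [setLIntegral_const, hnn]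
      have : ENNReal.ofReal (1 / (volume C).toReal) = (volume C)⁻¹ := by
        rw [one_div, ← ENNReal.toReal_inv,
          ENNReal.ofReal_toReal (ENNReal.inv_ne_top.mpr hvol0)]
      rw [this, ENNReal.inv_mul_cancel hvol0 hvoltop]
    · rw [Complex.norm_real, Real.norm_eq_abs, abs_of_nonneg (Real.sqrt_nonneg _),
        Real.sq_sqrt (by positivity)]
  exact le_antisymm (csSup_le ⟨_, hmem⟩ hub) (le_csSup ⟨_, hub⟩ hmem)
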